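/- If κ is a subtle cardinal, then κ is a regular cardinal. -/

import Mathlib

/-- `C` is a club (closed unbounded set) in the ordinal `o`:
`C ⊆ o`, `C` is closed under limit points `< o`, and `C` is unbounded in `o`. -/
def IsClubIn (o : Ordinal.{0}) (C : Set Ordinal.{0}) : Prop :=
  C ⊆ Set.Iio o ∧
  (∀ δ < o, (∃ β ∈ C, β < δ) → (∀ β < δ, ∃ γ ∈ C, β < γ ∧ γ < δ) → δ ∈ C) ∧
  (∀ β < o, ∃ γ ∈ C, β < γ)

/-- A cardinal `κ` is subtle if for every club `C ⊆ κ` and every sequence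
`⟨A_α : α ∈ C⟩` with `A_α ⊆ α` for all `α ∈ C`, there are `α < β` in `C` with
`A_α = A_β ∩ α`. -/
def Subtle (κ : Cardinal.{0}) : Prop :=
  ∀ C : Set Ordinal, IsClubIn κ.ord C →
    ∀ A : Ordinal → Set Ordinal, (∀ α ∈ C, A α ⊆ Set.Iio α) →
      ∃ α ∈ C, ∃ β ∈ C, α < β ∧ A α = A β ∩ Set.Iio α

/-- If `κ` is a subtle (uncountable) cardinal, then `κ` is regular. -/
theorem stmt1 (κ : Cardinal.{0}) (hκ : Cardinal.aleph0 < κ) (h : Subtle κ) :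
    κ.IsRegular := by
  refine ⟨hκ.le, ?_⟩
  by_contra hreg
  have hcof : κ.ord.cof < κ := lt_of_not_ge hreg
  set lam : Ordinal := κ.ord.cof.ord with hlam
  have hlamk : lam < κ.ord := Cardinal.ord_lt_ord.mpr hcof
  have hlim : Order.IsSuccLimit κ.ord := Cardinal.isSuccLimit_ord hκ.le
  obtain ⟨f, hf⟩ := Ordinal.exists_fundamental_sequence κ.ord
  -- total version of f
  set g : Ordinal → Ordinal := fun j => if hj : j < lam then f j hj else 0 with hg
  have hg_lt : ∀ j < lam, g j < κ.ord := by
    intro j hj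
    simp only [hg, dif_pos hj]
    exact hf.lt hj
  have hg_mono : ∀ i j, i < lam → j < lam → i ≤ j → g i ≤ g j := by
    intro i j hi hj hij
    simp only [hg, dif_pos hi, dif_pos hj]
    exact hf.monotone hi hj hij
  have hg_smono : ∀ i j, i < lam → j < lam → i < j → g i < g j := by
    intro i j hi hj hij
    simp only [hg, dif_pos hi, dif_pos hj]
    exact hf.strict_mono hi hj hij
  have hg_cof : ∀ α < κ.ord, ∃ j < lam, α < g j := by
    intro α hα
    have h1 : α + 1 < Ordinal.blsub lam f := by
      rw [hf.blsub_eq]; exact hlim.succ_lt hα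
    obtain ⟨j, hj, hjα⟩ := Ordinal.lt_blsub_iff.mp h1
    refine ⟨j, hj, ?_⟩
    simp only [hg, dif_pos hj]
    exact lt_of_lt_of_le (Order.lt_succ α) (Ordinal.add_one_eq_succ α ▸ hjα)
  -- The club C : limits points (inclusive) of the range of g
  set C : Set Ordinal := {δ | δ < κ.ord ∧ ∀ β < δ, ∃ j < lam, β < g j ∧ g j ≤ δ} with hC
  set C' : Set Ordinal := C ∩ Set.Ioi lam with hC'
  have hC'club : IsClubIn κ.ord C' := by
    refine ⟨fun δ hδ => hδ.1.1, ?_, ?_⟩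
    · rintro δ hδ ⟨β, ⟨hβC, hbl⟩, hβδ⟩ hcl
      refine ⟨⟨hδ, ?_⟩, lt_trans hbl hβδ⟩
      intro β' hβ'
      obtain ⟨γ, ⟨⟨hγκ, hγprop⟩, -⟩, hβ'γ, hγδ⟩ := hcl β' hβ'
      obtain ⟨j, hj, hji, hjγ⟩ := hγprop β' hβ'γ
      exact ⟨j, hj, hji, hjγ.trans hγδ.le⟩
    · intro β hβ
      obtain ⟨j, hj, hjβ⟩ := hg_cof (max β lam) (max_lt hβ hlamk)
      refine ⟨g j, ⟨⟨hg_lt j hj, ?_⟩, lt_of_le_of_lt (le_max_right β lam) hjβ⟩,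
        lt_of_le_of_lt (le_max_left β lam) hjβ⟩
      intro β' hβ'
      exact ⟨j, hj, hβ', le_rfl⟩
  -- the regressive-ish function v
  set v : Ordinal → Ordinal := fun δ => sInf {j | j < lam ∧ δ < g j} with hv
  have hv_mem : ∀ δ < κ.ord, v δ ∈ {j | j < lam ∧ δ < g j} := by
    intro δ hδ
    obtain ⟨j, hj, hjδ⟩ := hg_cof δ hδ
    exact csInf_mem (Set.nonempty_of_mem ⟨hj, hjδ⟩)
  have hv_smono : ∀ α β, α ∈ C → β ∈ C → α < β → v α < v β := by
    intro α β hα hβ hαβ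
    obtain ⟨j, hj, hjα, hjβ⟩ := hβ.2 α hαβ
    have h1 : v α ≤ j := csInf_le (OrderBot.bddBelow _) ⟨hj, hjα⟩
    have h2 : j < v β := by
      obtain ⟨hvbl, hvβ⟩ := hv_mem β hβ.1
      by_contra hle
      push_neg at hle
      exact absurd (lt_of_lt_of_le hvβ (hg_mono (v β) j hvbl hj hle)) (not_lt.mpr hjβ)
    exact lt_of_le_of_lt h1 h2
  -- apply subtlety
  obtain ⟨α, hα, β, hβ, hαβ, hAB⟩ := h C' hC'club (fun δ => {v δ})
    (by
      intro δ hδ x hx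
      rw [Set.mem_singleton_iff] at hx
      subst hx
      exact lt_trans (hv_mem δ hδ.1.1).1 hδ.2)
  have : v α ∈ ({v β} : Set Ordinal) ∩ Set.Iio α := hAB ▸ rfl
  have hne : v α < v β := hv_smono α β hα.1 hβ.1 hαβ
  rw [Set.mem_inter_iff, Set.mem_singleton_iff] at this
  exact absurd this.1 (ne_of_lt hne)
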